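/- If an aggregate allocation x is Pareto efficient and individually rational under some type-homogeneous preference profile P, then the aggregate allocation graph AG of the instance is acyclic. -/
import Mathlib


/-- if `x` is Pareto efficient and individually rational under a
type-homogeneous strict linear preference profile, then the aggregate
allocation graph is acyclic. -/
theorem stmt_7 {I H T : Type*} [Fintype I] [Fintype H]
    (P : T → H → H → Prop) (τ : I → T) (x ω : I → H)
    (hasymm : ∀ t : T, ∀ a b : H, P t a b → ¬ P t b a)
    (htrans : ∀ t : T, ∀ a b c : H, P t a b → P t b c → P t a c)
    (htotal : ∀ t : T, ∀ a b : H, a ≠ b → P t a b ∨ P t b a)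
    (IR : ∀ i : I, x i = ω i ∨ P (τ i) (x i) (ω i))
    (PE : ¬ ∃ σ : Equiv.Perm I,
      (∀ i : I, x (σ i) = x i ∨ P (τ i) (x (σ i)) (x i)) ∧
      (∃ i : I, P (τ i) (x (σ i)) (x i))) :
    ∀ h : H, ¬ Relation.TransGen
      (fun h h' : H => ∃ i j : I, τ i = τ j ∧ ω j = h ∧ x j = h' ∧ h' ≠ h ∧ x i = h)
      h h := by
  classical
  set r : H → H → Prop :=
    (fun h h' : H => ∃ i j : I, τ i = τ j ∧ ω j = h ∧ x j = h' ∧ h' ≠ h ∧ x i = h) with hrdef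
  intro h hcyc
  -- the "cycle class" of h
  set InC : H → Prop := fun c => Relation.ReflTransGen r h c ∧ Relation.TransGen r c h
    with hInCdef
  have hInCh : InC h := ⟨Relation.ReflTransGen.refl, hcyc⟩
  have step : ∀ c, InC c → ∃ c', r c c' ∧ InC c' := by
    intro c hc
    rcases hc with ⟨hhc, hch⟩
    obtain ⟨c', he, hc'h⟩ := Relation.TransGen.head'_iff.mp hch
    rcases Relation.reflTransGen_iff_eq_or_transGen.mp hc'h with heqq | ht
    · exact ⟨c', he, heqq ▸ hInCh⟩
    · exact ⟨c', he, hhc.trans (Relation.ReflTransGen.single he), ht⟩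
  -- a successor function on the cycle class
  set g : H → H := fun c => if hc : InC c then (step c hc).choose else c with hgdef
  have hg : ∀ c, InC c → r c (g c) ∧ InC (g c) := by
    intro c hc
    simp only [hgdef, dif_pos hc]
    exact (step c hc).choose_spec
  have hiter : ∀ n, InC (g^[n] h) := by
    intro n
    induction n with
    | zero => exact hInCh
    | succ n ih =>
      rw [Function.iterate_succ_apply']
      exact (hg _ ih).2
  -- for each cycle-class object, choose an agent holding it who strictly
  -- prefers the successor object
  have hag : ∀ c, InC c → ∃ i : I, x i = c ∧ P (τ i) (g c) c := by
    intro c hc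
    obtain ⟨i, j, hτ, hωj, hxj, hne, hxi⟩ := (hg c hc).1
    refine ⟨i, hxi, ?_⟩
    rcases IR j with he | hp
    · rw [hxj, hωj] at he; exact absurd he hne
    · rw [hτ, ← hxj, ← hωj]; exact hp
  -- key claim: no periodic point
  have key : ∀ m n : ℕ, m < n → g^[m] h = g^[n] h → False := by
    intro m n hlt heq
    set c₀ : H := g^[m] h with hc₀
    have hper0 : g^[n - m] c₀ = c₀ := by
      rw [hc₀, ← Function.iterate_add_apply, Nat.sub_add_cancel hlt.le, ← heq]
    have hPk : ∃ k, 0 < k ∧ g^[k] c₀ = c₀ := ⟨n - m, Nat.sub_pos_of_lt hlt, hper0⟩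
    obtain ⟨k, hkpos, hkper, hmin⟩ :
        ∃ k, 0 < k ∧ g^[k] c₀ = c₀ ∧ ∀ j, 0 < j → j < k → g^[j] c₀ ≠ c₀ := by
      refine ⟨Nat.find hPk, (Nat.find_spec hPk).1, (Nat.find_spec hPk).2, ?_⟩
      intro j hj hjk hje
      exact Nat.find_min hPk hjk ⟨hj, hje⟩
    have hInCc : ∀ p : ℕ, InC (g^[p] c₀) := by
      intro p
      rw [hc₀, ← Function.iterate_add_apply]
      exact hiter _
    -- the cycle points are pairwise distinct
    have hdist : ∀ p q : ℕ, p < q → q < k → g^[p] c₀ ≠ g^[q] c₀ := by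
      intro p q hpq hqk he
      have h1 : g^[k - q + q] c₀ = g^[k - q + p] c₀ := by
        rw [Function.iterate_add_apply, Function.iterate_add_apply, ← he]
      rw [Nat.sub_add_cancel hqk.le, hkper] at h1
      refine hmin (k - q + p) ?_ ?_ h1.symm
      · omega
      · omega
    obtain ⟨k', rfl⟩ : ∃ k', k = k' + 1 := ⟨k - 1, (Nat.succ_pred_eq_of_pos hkpos).symm⟩
    -- the chosen agents
    set a : Fin (k' + 1) → I := fun p => (hag _ (hInCc p)).choose with hadef
    have ha : ∀ p : Fin (k' + 1),
        x (a p) = g^[(p : ℕ)] c₀ ∧ P (τ (a p)) (g (g^[(p : ℕ)] c₀)) (g^[(p : ℕ)] c₀) :=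
      fun p => (hag _ (hInCc p)).choose_spec
    have hainj : Function.Injective a := by
      intro p q he
      have hxp := (ha p).1
      have hxq := (ha q).1
      rw [he, hxq] at hxp
      by_contra hne
      have hne' : (p : ℕ) ≠ (q : ℕ) := fun hc => hne (Fin.ext hc)
      rcases hne'.lt_or_gt with h1 | h1
      · exact hdist _ _ h1 q.isLt hxp.symm
      · exact hdist _ _ h1 p.isLt hxp
    set f : Fin (k' + 1) ↪ I := ⟨a, hainj⟩ with hfdef
    set σ : Equiv.Perm I := (finRotate (k' + 1)).viaFintypeEmbedding f with hσdef
    have hσa : ∀ p : Fin (k' + 1), σ (a p) = a (p + 1) := by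
      intro p
      have := (finRotate (k' + 1)).viaFintypeEmbedding_apply_image f p
      simpa [hfdef, finRotate_succ_apply] using this
    -- the object obtained after the rotation is the successor object
    have hxsucc : ∀ p : Fin (k' + 1), x (a (p + 1)) = g (g^[(p : ℕ)] c₀) := by
      intro p
      rw [(ha (p + 1)).1, ← Function.iterate_succ_apply' g (p : ℕ) c₀]
      by_cases hp : p = Fin.last k'
      · subst hp
        have h0 : ((Fin.last k' + 1 : Fin (k' + 1)) : ℕ) = 0 := by
          rw [Fin.val_add_one, if_pos rfl]
        rw [h0, Function.iterate_zero_apply, Fin.val_last]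
        exact hkper.symm
      · congr 1
        rw [Fin.val_add_one, if_neg hp]
    refine PE ⟨σ, ?_, ⟨a 0, ?_⟩⟩
    · intro i
      by_cases hi : i ∈ Set.range f
      · obtain ⟨p, rfl⟩ := hi
        right
        show P (τ (a p)) (x (σ (a p))) (x (a p))
        rw [hσa p, hxsucc p, (ha p).1]
        exact (ha p).2
      · left
        have hfix : σ i = i :=
          Equiv.Perm.viaFintypeEmbedding_apply_notMem_range (finRotate (k' + 1)) f hi
        rw [show σ i = i from hfix]
    · rw [hσa 0, hxsucc 0, (ha 0).1]
      exact (ha 0).2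
  obtain ⟨m, n, hmn, heq⟩ :=
    Finite.exists_ne_map_eq_of_infinite (fun n : ℕ => g^[n] h)
  rcases hmn.lt_or_gt with hlt | hlt
  · exact key m n hlt heq
  · exact key n m hlt heq.symm
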